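/- For all integers n ≥ 4, the 4-fold convolution ∑_{i+j+k+l=n, i,j,k,l≥1} a(i)a(j)a(k)a(l), divided by a(n), equals 20(n-1)(n-2)(n-3)(25n^6+1350n^5+31495n^4+347406n^3+1211092n^2+1580304n+665280) / (27(3n+11)(3n+8)(3n+5)(3n+10)(3n+7)(3n+4)(n+4)(n+3)(n+2)), where a(n) = 2(4n+1)!/((n+1)!(3n+2)!). -/

import Mathlib

open Filter Finset

noncomputable def a (n : ℕ) : ℝ :=
  2 * (Nat.factorial (4 * n + 1)) / ((Nat.factorial (n + 1)) * (Nat.factorial (3 * n + 2)))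


noncomputable def fc : ℕ → ℝ → ℝ
  | 0, _ => 1
  | (n+1), x => x * (∏ i ∈ Finset.range n, (x + (3*n+4) + (i:ℝ))) / (Nat.factorial (n+1))

lemma fc_zero (x : ℝ) : fc 0 x = 1 := rfl

lemma fc_succ (n : ℕ) (x : ℝ) :
    fc (n+1) x = x * (∏ i ∈ Finset.range n, (x + (3*n+4) + (i:ℝ))) / (Nat.factorial (n+1)) := rfl

lemma fc_succ_zero (n : ℕ) : fc (n+1) 0 = 0 := by
  simp [fc_succ]

lemma fc_diff (n : ℕ) (x : ℝ) : fc (n+1) (x+1) - fc (n+1) x = fc n (x+4) := by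
  cases n with
  | zero => simp [fc_succ, fc_zero]
  | succ m =>
    have hQ1 : (∏ i ∈ Finset.range (m+1), (x + 1 + (3*(m+1)+4) + (i:ℝ)))
        = (∏ i ∈ Finset.range m, (x + 4 + (3*m+4) + (i:ℝ))) * (x + (4*m+8)) := by
      rw [Finset.prod_range_succ]
      congr 1
      · apply Finset.prod_congr rfl; intro i _; push_cast; ring
      · push_cast; ring
    have hQ2 : (∏ i ∈ Finset.range (m+1), (x + (3*(m+1)+4) + (i:ℝ)))
        = (∏ i ∈ Finset.range m, (x + 4 + (3*m+4) + (i:ℝ))) * (x + (3*m+7)) := by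
      rw [Finset.prod_range_succ']
      congr 1
      · apply Finset.prod_congr rfl; intro i _; push_cast; ring_nf
      · push_cast; ring_nf
    rw [fc_succ, fc_succ, fc_succ]
    push_cast at hQ1 hQ2 ⊢
    rw [hQ1, hQ2]
    have h1 : (Nat.factorial (m+1+1) : ℝ) = (m+2) * Nat.factorial (m+1) := by
      rw [Nat.factorial_succ]; push_cast; ring
    rw [h1]
    have h2 : (Nat.factorial (m+1) : ℝ) ≠ 0 := Nat.cast_ne_zero.mpr (Nat.factorial_ne_zero _)
    have h3 : ((m:ℝ)+2) ≠ 0 := by positivity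
    field_simp
    ring

lemma fc_conv (n : ℕ) : ∀ (x : ℕ) (y : ℝ),
    (∑ k ∈ Finset.range (n+1), fc k x * fc (n-k) y) = fc n (x + y) := by
  induction n with
  | zero => intro x y; simp [fc_zero]
  | succ n ih =>
    intro x y
    induction x with
    | zero =>
      rw [Finset.sum_eq_single 0]
      · simp [fc_zero]
      · intro k _ hk
        obtain ⟨m, rfl⟩ := Nat.exists_eq_succ_of_ne_zero hk
        simp [fc_succ_zero]
      · intro h; simp at h
    | succ x ihx =>
      have key : (∑ k ∈ Finset.range (n+2), fc k (↑(x+1)) * fc (n+1-k) y)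
          = (∑ k ∈ Finset.range (n+2), fc k x * fc (n+1-k) y)
            + (∑ k ∈ Finset.range (n+2), (fc k ((x:ℝ)+1) - fc k x) * fc (n+1-k) y) := by
        rw [← Finset.sum_add_distrib]
        apply Finset.sum_congr rfl
        intro k _
        push_cast
        ring
      rw [key, ihx]
      have key2 : (∑ k ∈ Finset.range (n+2), (fc k ((x:ℝ)+1) - fc k x) * fc (n+1-k) y)
          = ∑ k ∈ Finset.range (n+1), fc k ((x:ℝ)+4) * fc (n-k) y := by
        rw [Finset.sum_range_succ']
        simp only [fc_zero, sub_self, zero_mul, add_zero]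
        apply Finset.sum_congr rfl
        intro k _
        rw [fc_diff k (x:ℝ)]
        congr 2
        omega
      have key3 : (∑ k ∈ Finset.range (n+1), fc k ((x:ℝ)+4) * fc (n-k) y) = fc n ((x:ℝ)+4+y) := by
        have := ih (x+4) y
        push_cast at this
        convert this using 2
      rw [key2, key3]
      have hd := fc_diff n ((x:ℝ)+y)
      push_cast
      have e1 : (x:ℝ)+1+y = (x:ℝ)+y+1 := by ring
      have e2 : (x:ℝ)+4+y = (x:ℝ)+y+4 := by ring
      rw [e1, e2]
      linarith

noncomputable def hh (m : ℕ) : ℝ := fc m 4 + fc m 5 - fc m 6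

lemma fc_conv' (n x y : ℕ) :
    (∑ k ∈ Finset.range (n+1), fc k (x:ℝ) * fc (n-k) (y:ℝ)) = fc n ((x:ℝ) + (y:ℝ)) :=
  fc_conv n x (y:ℝ)

noncomputable def G2 (q : ℕ) : ℝ := ∑ k ∈ Finset.range (q+1), hh k * hh (q-k)

lemma G2_eq (q : ℕ) : G2 q
    = fc q 8 + 2*fc q 9 - fc q 10 - 2*fc q 11 + fc q 12 := by
  rw [G2]
  have e44 := fc_conv' q 4 4; have e45 := fc_conv' q 4 5; have e46 := fc_conv' q 4 6
  have e54 := fc_conv' q 5 4; have e55 := fc_conv' q 5 5; have e56 := fc_conv' q 5 6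
  have e64 := fc_conv' q 6 4; have e65 := fc_conv' q 6 5; have e66 := fc_conv' q 6 6
  norm_num at e44 e45 e46 e54 e55 e56 e64 e65 e66
  have expand : (∑ k ∈ Finset.range (q+1), hh k * hh (q-k))
      = (∑ k ∈ Finset.range (q+1), fc k 4 * fc (q-k) 4)
      + (∑ k ∈ Finset.range (q+1), fc k 4 * fc (q-k) 5)
      - (∑ k ∈ Finset.range (q+1), fc k 4 * fc (q-k) 6)
      + (∑ k ∈ Finset.range (q+1), fc k 5 * fc (q-k) 4)
      + (∑ k ∈ Finset.range (q+1), fc k 5 * fc (q-k) 5)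
      - (∑ k ∈ Finset.range (q+1), fc k 5 * fc (q-k) 6)
      - (∑ k ∈ Finset.range (q+1), fc k 6 * fc (q-k) 4)
      - (∑ k ∈ Finset.range (q+1), fc k 6 * fc (q-k) 5)
      + (∑ k ∈ Finset.range (q+1), fc k 6 * fc (q-k) 6) := by
    simp only [← Finset.sum_add_distrib, ← Finset.sum_sub_distrib]
    apply Finset.sum_congr rfl
    intro k _
    simp only [hh]
    ring
  rw [expand, e44, e45, e46, e54, e55, e56, e64, e65, e66]
  ring

noncomputable def G3 (q : ℕ) : ℝ := ∑ j ∈ Finset.range (q+1), hh j * G2 (q-j)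
noncomputable def G4 (N : ℕ) : ℝ := ∑ i ∈ Finset.range (N+1), hh i * G3 (N-i)

lemma G3_eq (q : ℕ) : G3 q = fc q 12 + 3*fc q 13 - 5*fc q 15 + 3*fc q 17 - fc q 18 := by
  have e1 := fc_conv' q 4 8; have e2 := fc_conv' q 4 9; have e3 := fc_conv' q 4 10
  have e4 := fc_conv' q 4 11; have e5 := fc_conv' q 4 12
  have f1 := fc_conv' q 5 8; have f2 := fc_conv' q 5 9; have f3 := fc_conv' q 5 10
  have f4 := fc_conv' q 5 11; have f5 := fc_conv' q 5 12
  have g1 := fc_conv' q 6 8; have g2 := fc_conv' q 6 9; have g3 := fc_conv' q 6 10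
  have g4 := fc_conv' q 6 11; have g5 := fc_conv' q 6 12
  norm_num at e1 e2 e3 e4 e5 f1 f2 f3 f4 f5 g1 g2 g3 g4 g5
  have expand : G3 q
      = ((∑ k ∈ Finset.range (q+1), fc k 4 * fc (q-k) 8)
      + 2*(∑ k ∈ Finset.range (q+1), fc k 4 * fc (q-k) 9)
      - (∑ k ∈ Finset.range (q+1), fc k 4 * fc (q-k) 10)
      - 2*(∑ k ∈ Finset.range (q+1), fc k 4 * fc (q-k) 11)
      + (∑ k ∈ Finset.range (q+1), fc k 4 * fc (q-k) 12))
      + ((∑ k ∈ Finset.range (q+1), fc k 5 * fc (q-k) 8)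
      + 2*(∑ k ∈ Finset.range (q+1), fc k 5 * fc (q-k) 9)
      - (∑ k ∈ Finset.range (q+1), fc k 5 * fc (q-k) 10)
      - 2*(∑ k ∈ Finset.range (q+1), fc k 5 * fc (q-k) 11)
      + (∑ k ∈ Finset.range (q+1), fc k 5 * fc (q-k) 12))
      - ((∑ k ∈ Finset.range (q+1), fc k 6 * fc (q-k) 8)
      + 2*(∑ k ∈ Finset.range (q+1), fc k 6 * fc (q-k) 9)
      - (∑ k ∈ Finset.range (q+1), fc k 6 * fc (q-k) 10)
      - 2*(∑ k ∈ Finset.range (q+1), fc k 6 * fc (q-k) 11)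
      + (∑ k ∈ Finset.range (q+1), fc k 6 * fc (q-k) 12)) := by
    rw [show G3 q = ∑ k ∈ Finset.range (q+1),
        ((fc k 4 * fc (q-k) 8 + 2*(fc k 4 * fc (q-k) 9) - fc k 4 * fc (q-k) 10
          - 2*(fc k 4 * fc (q-k) 11) + fc k 4 * fc (q-k) 12)
        + (fc k 5 * fc (q-k) 8 + 2*(fc k 5 * fc (q-k) 9) - fc k 5 * fc (q-k) 10
          - 2*(fc k 5 * fc (q-k) 11) + fc k 5 * fc (q-k) 12)
        - (fc k 6 * fc (q-k) 8 + 2*(fc k 6 * fc (q-k) 9) - fc k 6 * fc (q-k) 10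
          - 2*(fc k 6 * fc (q-k) 11) + fc k 6 * fc (q-k) 12)) from
      Finset.sum_congr rfl (fun k _ => by rw [hh, G2_eq]; ring)]
    simp only [Finset.sum_add_distrib, Finset.sum_sub_distrib, ← Finset.mul_sum]
  rw [expand, e1, e2, e3, e4, e5, f1, f2, f3, f4, f5, g1, g2, g3, g4, g5]
  ring

lemma G4_eq (N : ℕ) : G4 N = fc N 16 + 4*fc N 17 + 2*fc N 18 - 8*fc N 19 - 5*fc N 20
    + 8*fc N 21 + 2*fc N 22 - 4*fc N 23 + fc N 24 := by
  have e1 := fc_conv' N 4 12; have e2 := fc_conv' N 4 13; have e3 := fc_conv' N 4 15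
  have e4 := fc_conv' N 4 17; have e5 := fc_conv' N 4 18
  have f1 := fc_conv' N 5 12; have f2 := fc_conv' N 5 13; have f3 := fc_conv' N 5 15
  have f4 := fc_conv' N 5 17; have f5 := fc_conv' N 5 18
  have g1 := fc_conv' N 6 12; have g2 := fc_conv' N 6 13; have g3 := fc_conv' N 6 15
  have g4 := fc_conv' N 6 17; have g5 := fc_conv' N 6 18
  norm_num at e1 e2 e3 e4 e5 f1 f2 f3 f4 f5 g1 g2 g3 g4 g5
  have expand : G4 N
      = ((∑ k ∈ Finset.range (N+1), fc k 4 * fc (N-k) 12)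
      + 3*(∑ k ∈ Finset.range (N+1), fc k 4 * fc (N-k) 13)
      - 5*(∑ k ∈ Finset.range (N+1), fc k 4 * fc (N-k) 15)
      + 3*(∑ k ∈ Finset.range (N+1), fc k 4 * fc (N-k) 17)
      - (∑ k ∈ Finset.range (N+1), fc k 4 * fc (N-k) 18))
      + ((∑ k ∈ Finset.range (N+1), fc k 5 * fc (N-k) 12)
      + 3*(∑ k ∈ Finset.range (N+1), fc k 5 * fc (N-k) 13)
      - 5*(∑ k ∈ Finset.range (N+1), fc k 5 * fc (N-k) 15)
      + 3*(∑ k ∈ Finset.range (N+1), fc k 5 * fc (N-k) 17)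
      - (∑ k ∈ Finset.range (N+1), fc k 5 * fc (N-k) 18))
      - ((∑ k ∈ Finset.range (N+1), fc k 6 * fc (N-k) 12)
      + 3*(∑ k ∈ Finset.range (N+1), fc k 6 * fc (N-k) 13)
      - 5*(∑ k ∈ Finset.range (N+1), fc k 6 * fc (N-k) 15)
      + 3*(∑ k ∈ Finset.range (N+1), fc k 6 * fc (N-k) 17)
      - (∑ k ∈ Finset.range (N+1), fc k 6 * fc (N-k) 18)) := by
    rw [show G4 N = ∑ k ∈ Finset.range (N+1),
        ((fc k 4 * fc (N-k) 12 + 3*(fc k 4 * fc (N-k) 13) - 5*(fc k 4 * fc (N-k) 15)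
          + 3*(fc k 4 * fc (N-k) 17) - fc k 4 * fc (N-k) 18)
        + (fc k 5 * fc (N-k) 12 + 3*(fc k 5 * fc (N-k) 13) - 5*(fc k 5 * fc (N-k) 15)
          + 3*(fc k 5 * fc (N-k) 17) - fc k 5 * fc (N-k) 18)
        - (fc k 6 * fc (N-k) 12 + 3*(fc k 6 * fc (N-k) 13) - 5*(fc k 6 * fc (N-k) 15)
          + 3*(fc k 6 * fc (N-k) 17) - fc k 6 * fc (N-k) 18)) from
      Finset.sum_congr rfl (fun k _ => by rw [hh, G3_eq]; ring)]
    simp only [Finset.sum_add_distrib, Finset.sum_sub_distrib, ← Finset.mul_sum]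
  rw [expand, e1, e2, e3, e4, e5, f1, f2, f3, f4, f5, g1, g2, g3, g4, g5]
  ring

lemma nest (N : ℕ) :
    (∑ i ∈ Finset.range (N+3), ∑ j ∈ Finset.range (N+2-i), ∑ k ∈ Finset.range (N+1-i-j),
      hh i * hh j * hh k * hh (N-i-j-k)) = G4 N := by
  rw [G4]
  rw [← Finset.sum_subset (Finset.range_subset_range.mpr (by omega : N+1 ≤ N+3))]
  · apply Finset.sum_congr rfl
    intro i hi
    rw [Finset.mem_range] at hi
    rw [G3]
    rw [← Finset.sum_subset (Finset.range_subset_range.mpr (by omega : N-i+1 ≤ N+2-i))]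
    · rw [Finset.mul_sum]
      apply Finset.sum_congr rfl
      intro j hj
      rw [Finset.mem_range] at hj
      rw [G2, Finset.mul_sum, Finset.mul_sum]
      rw [show N+1-i-j = (N-i-j)+1 by omega]
      apply Finset.sum_congr rfl
      intro k hk
      ring
    · intro j hj hj2
      rw [Finset.mem_range] at hj hj2
      rw [show N+1-i-j = 0 by omega, Finset.range_zero, Finset.sum_empty]
  · intro i hi hi2
    rw [Finset.mem_range] at hi hi2
    apply Finset.sum_eq_zero
    intro j hj
    rw [Finset.mem_range] at hj
    rw [show N+1-i-j = 0 by omega, Finset.range_zero, Finset.sum_empty]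

lemma prod_asc (k c : ℕ) :
    ((Nat.factorial c : ℝ)) * ∏ i ∈ Finset.range k, ((c:ℝ)+1+i) = (Nat.factorial (c+k) : ℝ) := by
  induction k with
  | zero => simp
  | succ k ih =>
    rw [Finset.prod_range_succ, ← mul_assoc, ih, show c+(k+1) = (c+k)+1 by ring,
      Nat.factorial_succ]
    push_cast
    ring

lemma fc_eq (N s : ℕ) : fc N ((s:ℝ)+1)
    = ((s:ℝ)+1) * (Nat.factorial (4*N+s)) / (Nat.factorial N * Nat.factorial (3*N+s+1)) := by
  cases N with
  | zero =>
    show (1:ℝ) = _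
    rw [Nat.factorial_succ, Nat.factorial_zero]
    have : (Nat.factorial s : ℝ) ≠ 0 := Nat.cast_ne_zero.mpr (Nat.factorial_ne_zero _)
    push_cast
    field_simp
    ring
  | succ m =>
    show ((s:ℝ)+1) * (∏ i ∈ Finset.range m, (((s:ℝ)+1) + (3*m+4) + (i:ℝ))) / (Nat.factorial (m+1)) = _
    have hp : (∏ i ∈ Finset.range m, (((s:ℝ)+1) + (3*m+4) + (i:ℝ)))
        = (Nat.factorial (s+3*m+4+m) : ℝ) / (Nat.factorial (s+3*m+4) : ℝ) := by
      have h := prod_asc m (s+3*m+4)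
      have hne : (Nat.factorial (s+3*m+4) : ℝ) ≠ 0 := Nat.cast_ne_zero.mpr (Nat.factorial_ne_zero _)
      rw [show (∏ i ∈ Finset.range m, (((s:ℝ)+1) + (3*m+4) + (i:ℝ)))
          = ∏ i ∈ Finset.range m, (((s+3*m+4 : ℕ):ℝ)+1+(i:ℝ)) from
        Finset.prod_congr rfl (fun i _ => by push_cast; ring)]
      field_simp at h ⊢
      linarith [h]
    rw [hp]
    rw [show 4*(m+1)+s = s+3*m+4+m by ring, show 3*(m+1)+s+1 = s+3*m+4 by ring]
    have h1 : (Nat.factorial (s+3*m+4) : ℝ) ≠ 0 := Nat.cast_ne_zero.mpr (Nat.factorial_ne_zero _)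
    have h2 : (Nat.factorial (m+1) : ℝ) ≠ 0 := Nat.cast_ne_zero.mpr (Nat.factorial_ne_zero _)
    have h3 : (Nat.factorial (s+3*m+4+m) : ℝ) ≥ 0 := by positivity
    field_simp

lemma a_succ (m : ℕ) : a (m+1) = hh m := by
  have h4 : fc m (4:ℝ) = 4 * (Nat.factorial (4*m+3)) / (Nat.factorial m * Nat.factorial (3*m+4)) := by
    have h := fc_eq m 3
    norm_num [show 3*m+3+1 = 3*m+4 by omega] at h
    exact h
  have h5 : fc m (5:ℝ) = 5 * (Nat.factorial (4*m+4)) / (Nat.factorial m * Nat.factorial (3*m+5)) := by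
    have h := fc_eq m 4
    norm_num [show 3*m+4+1 = 3*m+5 by omega] at h
    exact h
  have h6 : fc m (6:ℝ) = 6 * (Nat.factorial (4*m+5)) / (Nat.factorial m * Nat.factorial (3*m+6)) := by
    have h := fc_eq m 5
    norm_num [show 3*m+5+1 = 3*m+6 by omega] at h
    exact h
  rw [hh, h4, h5, h6, a]
  rw [show 4*(m+1)+1 = 4*m+5 by ring, show 3*(m+1)+2 = 3*m+5 by ring]
  have e1 : (Nat.factorial (4*m+5) : ℝ) = (4*m+5)*(4*m+4)*(Nat.factorial (4*m+3)) := by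
    rw [show 4*m+5 = (4*m+4)+1 by ring, Nat.factorial_succ, show 4*m+4 = (4*m+3)+1 by ring,
      Nat.factorial_succ]
    push_cast; ring
  have e2 : (Nat.factorial (4*m+4) : ℝ) = (4*m+4)*(Nat.factorial (4*m+3)) := by
    rw [show 4*m+4 = (4*m+3)+1 by ring, Nat.factorial_succ]; push_cast; ring
  have e3 : (Nat.factorial (3*m+5) : ℝ) = (3*m+5)*(Nat.factorial (3*m+4)) := by
    rw [show 3*m+5 = (3*m+4)+1 by ring, Nat.factorial_succ]; push_cast; ring
  have e4 : (Nat.factorial (3*m+6) : ℝ) = (3*m+6)*(3*m+5)*(Nat.factorial (3*m+4)) := by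
    rw [show 3*m+6 = (3*m+5)+1 by ring, Nat.factorial_succ, show 3*m+5 = (3*m+4)+1 by ring,
      Nat.factorial_succ]
    push_cast; ring
  have e5 : (Nat.factorial (m+1+1) : ℝ) = (m+2)*(m+1)*(Nat.factorial m) := by
    rw [Nat.factorial_succ, Nat.factorial_succ]; push_cast; ring
  rw [e1, e2, e3, e4, e5]
  have n1 : (Nat.factorial (4*m+3) : ℝ) ≠ 0 := Nat.cast_ne_zero.mpr (Nat.factorial_ne_zero _)
  have n2 : (Nat.factorial (3*m+4) : ℝ) ≠ 0 := Nat.cast_ne_zero.mpr (Nat.factorial_ne_zero _)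
  have n3 : (Nat.factorial m : ℝ) ≠ 0 := Nat.cast_ne_zero.mpr (Nat.factorial_ne_zero _)
  have p1 : ((m:ℝ)+2) ≠ 0 := by positivity
  have p2 : ((m:ℝ)+1) ≠ 0 := by positivity
  have p3 : (3*(m:ℝ)+5) ≠ 0 := by positivity
  have p4 : (3*(m:ℝ)+6) ≠ 0 := by positivity
  field_simp
  ring

set_option maxHeartbeats 16000000 in
lemma scalar (x : ℝ) (hx : 0 ≤ x) :
    (((16 * (x+1) * (x+2) * (x+3) * (x+4) * (x+5)) / (2 * (4*x+16) * (4*x+17) * (3*x+15) * (3*x+16)))) + (4*((17 * (x+1) * (x+2) * (x+3) * (x+4) * (x+5)) / (2 * (4*x+17) * (3*x+15) * (3*x+16) * (3*x+17)))) + (2*((18 * (x+1) * (x+2) * (x+3) * (x+4) * (x+5)) / (2 * (3*x+15) * (3*x+16) * (3*x+17) * (3*x+18)))) - (8*((19 * (x+1) * (x+2) * (x+3) * (x+4) * (x+5) * (4*x+18)) / (2 * (3*x+15) * (3*x+16) * (3*x+17) * (3*x+18) * (3*x+19)))) - (5*((20 * (x+1) * (x+2) * (x+3) * (x+4) * (x+5)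 * (4*x+18) * (4*x+19)) / (2 * (3*x+15) * (3*x+16) * (3*x+17) * (3*x+18) * (3*x+19) * (3*x+20)))) + (8*((21 * (x+1) * (x+2) * (x+3) * (x+4) * (x+5) * (4*x+18) * (4*x+19) * (4*x+20)) / (2 * (3*x+15) * (3*x+16) * (3*x+17) * (3*x+18) * (3*x+19) * (3*x+20) * (3*x+21)))) + (2*((22 * (x+1) * (x+2) * (x+3) * (x+4) * (x+5) * (4*x+18) * (4*x+19) * (4*x+20) * (4*x+21)) / (2 * (3*x+15) * (3*x+16) * (3*x+17) * (3*x+18) * (3*x+19) * (3*x+20) * (3*x+21) * (3*x+22)))) - (4*((23 * (x+1) * (x+2) * (x+3) * (x+4) * (x+5) * (4*x+18) * (4*x+19) * (4*x+20) * (4*x+21) * (4*x+22)) / (2 * (3*x+15) * (3*x+16) * (3*x+17) * (3*x+18) * (3*x+19) * (3*x+20) * (3*x+21) * (3*x+22) * (3*x+23)))) + ((24 * (x+1) * (x+2) * (x+3) * (x+4) * (x+5) * (4*x+18) * (4*x+19) * (4*x+20) * (4*x+21) * (4*x+22) * (4*x+23)) / (2 * (3*x+15) * (3*x+16) * (3*x+17)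 * (3*x+18) * (3*x+19) * (3*x+20) * (3*x+21) * (3*x+22) * (3*x+23) * (3*x+24))) =
      (20 * (x + 4 - 1) * (x + 4 - 2) * (x + 4 - 3) *
          (25 * (x+4)^6 + 1350 * (x+4)^5 + 31495 * (x+4)^4 + 347406 * (x+4)^3 +
            1211092 * (x+4)^2 + 1580304 * (x+4) + 665280)) /
        (27 * (3 * (x+4) + 11) * (3 * (x+4) + 8) * (3 * (x+4) + 5) *
          (3 * (x+4) + 10) * (3 * (x+4) + 7) * (3 * (x+4) + 4) *
          ((x+4) + 4) * ((x+4) + 3) * ((x+4) + 2)) := by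
  have nz1 : (4*x+16) ≠ 0 := ne_of_gt (by linarith)
  have nz2 : (4*x+17) ≠ 0 := ne_of_gt (by linarith)
  have nz3 : (4*x+18) ≠ 0 := ne_of_gt (by linarith)
  have nz4 : (4*x+19) ≠ 0 := ne_of_gt (by linarith)
  have nz5 : (4*x+20) ≠ 0 := ne_of_gt (by linarith)
  have nz6 : (4*x+21) ≠ 0 := ne_of_gt (by linarith)
  have nz7 : (4*x+22) ≠ 0 := ne_of_gt (by linarith)
  have nz8 : (4*x+23) ≠ 0 := ne_of_gt (by linarith)
  have nz9 : (3*x+15) ≠ 0 := ne_of_gt (by linarith)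
  have nz10 : (3*x+16) ≠ 0 := ne_of_gt (by linarith)
  have nz11 : (3*x+17) ≠ 0 := ne_of_gt (by linarith)
  have nz12 : (3*x+18) ≠ 0 := ne_of_gt (by linarith)
  have nz13 : (3*x+19) ≠ 0 := ne_of_gt (by linarith)
  have nz14 : (3*x+20) ≠ 0 := ne_of_gt (by linarith)
  have nz15 : (3*x+21) ≠ 0 := ne_of_gt (by linarith)
  have nz16 : (3*x+22) ≠ 0 := ne_of_gt (by linarith)
  have nz17 : (3*x+23) ≠ 0 := ne_of_gt (by linarith)
  have nz18 : (3*x+24) ≠ 0 := ne_of_gt (by linarith)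
  field_simp
  ring

set_option maxHeartbeats 2000000 in
lemma final (N : ℕ) :
    (fc N 16 + 4*fc N 17 + 2*fc N 18 - 8*fc N 19 - 5*fc N 20
      + 8*fc N 21 + 2*fc N 22 - 4*fc N 23 + fc N 24) / a (N+4) =
      (20 * ((N:ℝ) + 4 - 1) * ((N:ℝ) + 4 - 2) * ((N:ℝ) + 4 - 3) *
          (25 * ((N:ℝ)+4)^6 + 1350 * ((N:ℝ)+4)^5 + 31495 * ((N:ℝ)+4)^4 + 347406 * ((N:ℝ)+4)^3 +
            1211092 * ((N:ℝ)+4)^2 + 1580304 * ((N:ℝ)+4) + 665280)) /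
        (27 * (3 * ((N:ℝ)+4) + 11) * (3 * ((N:ℝ)+4) + 8) * (3 * ((N:ℝ)+4) + 5) *
          (3 * ((N:ℝ)+4) + 10) * (3 * ((N:ℝ)+4) + 7) * (3 * ((N:ℝ)+4) + 4) *
          (((N:ℝ)+4) + 4) * (((N:ℝ)+4) + 3) * (((N:ℝ)+4) + 2)) := by
  have ha : a (N+4) = 2 * (Nat.factorial (4*N+17)) / ((Nat.factorial (N+5)) * (Nat.factorial (3*N+14))) := by
    rw [a, show 4*(N+4)+1 = 4*N+17 by omega, show N+4+1 = N+5 by omega,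
      show 3*(N+4)+2 = 3*N+14 by omega]
  set a4 := a (N+4) with ha4
  have hane : a4 ≠ 0 := by
    rw [ha]
    have n1 : ((Nat.factorial (4*N+17)) : ℝ) > 0 := by positivity
    have n2 : ((Nat.factorial (N+5)) : ℝ) > 0 := by positivity
    have n3 : ((Nat.factorial (3*N+14)) : ℝ) > 0 := by positivity
    positivity
  have h16 : fc N (16:ℝ) = 16 * (Nat.factorial (4*N+15)) / (Nat.factorial N * Nat.factorial (3*N+16)) := by
    have h := fc_eq N 15
    norm_num [show 3*N+15+1 = 3*N+16 by omega] at h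
    exact h
  have h17 : fc N (17:ℝ) = 17 * (Nat.factorial (4*N+16)) / (Nat.factorial N * Nat.factorial (3*N+17)) := by
    have h := fc_eq N 16
    norm_num [show 3*N+16+1 = 3*N+17 by omega] at h
    exact h
  have h18 : fc N (18:ℝ) = 18 * (Nat.factorial (4*N+17)) / (Nat.factorial N * Nat.factorial (3*N+18)) := by
    have h := fc_eq N 17
    norm_num [show 3*N+17+1 = 3*N+18 by omega] at h
    exact h
  have h19 : fc N (19:ℝ) = 19 * (Nat.factorial (4*N+18)) / (Nat.factorial N * Nat.factorial (3*N+19)) := by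
    have h := fc_eq N 18
    rw [show 3*N+18+1 = 3*N+19 by omega, show ((18:ℕ):ℝ)+1 = 19 by norm_num] at h
    exact h
  have h20 : fc N (20:ℝ) = 20 * (Nat.factorial (4*N+19)) / (Nat.factorial N * Nat.factorial (3*N+20)) := by
    have h := fc_eq N 19
    rw [show 3*N+19+1 = 3*N+20 by omega, show ((19:ℕ):ℝ)+1 = 20 by norm_num] at h
    exact h
  have h21 : fc N (21:ℝ) = 21 * (Nat.factorial (4*N+20)) / (Nat.factorial N * Nat.factorial (3*N+21)) := by
    have h := fc_eq N 20
    rw [show 3*N+20+1 = 3*N+21 by omega, show ((20:ℕ):ℝ)+1 = 21 by norm_num] at h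
    exact h
  have h22 : fc N (22:ℝ) = 22 * (Nat.factorial (4*N+21)) / (Nat.factorial N * Nat.factorial (3*N+22)) := by
    have h := fc_eq N 21
    rw [show 3*N+21+1 = 3*N+22 by omega, show ((21:ℕ):ℝ)+1 = 22 by norm_num] at h
    exact h
  have h23 : fc N (23:ℝ) = 23 * (Nat.factorial (4*N+22)) / (Nat.factorial N * Nat.factorial (3*N+23)) := by
    have h := fc_eq N 22
    rw [show 3*N+22+1 = 3*N+23 by omega, show ((22:ℕ):ℝ)+1 = 23 by norm_num] at h
    exact h
  have h24 : fc N (24:ℝ) = 24 * (Nat.factorial (4*N+23)) / (Nat.factorial N * Nat.factorial (3*N+24)) := by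
    have h := fc_eq N 23
    rw [show 3*N+23+1 = 3*N+24 by omega, show ((23:ℕ):ℝ)+1 = 24 by norm_num] at h
    exact h
  have w4_15 : ((Nat.factorial (4*N+16)) : ℝ) = (4*(N:ℝ)+16) * (Nat.factorial (4*N+15)) := by
    rw [show 4*N+16 = (4*N+15)+1 by omega, Nat.factorial_succ]; push_cast; ring
  have w4_16 : ((Nat.factorial (4*N+17)) : ℝ) = (4*(N:ℝ)+17) * (Nat.factorial (4*N+16)) := by
    rw [show 4*N+17 = (4*N+16)+1 by omega, Nat.factorial_succ]; push_cast; ring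
  have w4_17 : ((Nat.factorial (4*N+18)) : ℝ) = (4*(N:ℝ)+18) * (Nat.factorial (4*N+17)) := by
    rw [show 4*N+18 = (4*N+17)+1 by omega, Nat.factorial_succ]; push_cast; ring
  have w4_18 : ((Nat.factorial (4*N+19)) : ℝ) = (4*(N:ℝ)+19) * (Nat.factorial (4*N+18)) := by
    rw [show 4*N+19 = (4*N+18)+1 by omega, Nat.factorial_succ]; push_cast; ring
  have w4_19 : ((Nat.factorial (4*N+20)) : ℝ) = (4*(N:ℝ)+20) * (Nat.factorial (4*N+19)) := by
    rw [show 4*N+20 = (4*N+19)+1 by omega, Nat.factorial_succ]; push_cast; ring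
  have w4_20 : ((Nat.factorial (4*N+21)) : ℝ) = (4*(N:ℝ)+21) * (Nat.factorial (4*N+20)) := by
    rw [show 4*N+21 = (4*N+20)+1 by omega, Nat.factorial_succ]; push_cast; ring
  have w4_21 : ((Nat.factorial (4*N+22)) : ℝ) = (4*(N:ℝ)+22) * (Nat.factorial (4*N+21)) := by
    rw [show 4*N+22 = (4*N+21)+1 by omega, Nat.factorial_succ]; push_cast; ring
  have w4_22 : ((Nat.factorial (4*N+23)) : ℝ) = (4*(N:ℝ)+23) * (Nat.factorial (4*N+22)) := by
    rw [show 4*N+23 = (4*N+22)+1 by omega, Nat.factorial_succ]; push_cast; ring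
  have w4_23 : ((Nat.factorial (4*N+24)) : ℝ) = (4*(N:ℝ)+24) * (Nat.factorial (4*N+23)) := by
    rw [show 4*N+24 = (4*N+23)+1 by omega, Nat.factorial_succ]; push_cast; ring
  have w3_14 : ((Nat.factorial (3*N+15)) : ℝ) = (3*(N:ℝ)+15) * (Nat.factorial (3*N+14)) := by
    rw [show 3*N+15 = (3*N+14)+1 by omega, Nat.factorial_succ]; push_cast; ring
  have w3_15 : ((Nat.factorial (3*N+16)) : ℝ) = (3*(N:ℝ)+16) * (Nat.factorial (3*N+15)) := by
    rw [show 3*N+16 = (3*N+15)+1 by omega, Nat.factorial_succ]; push_cast; ring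
  have w3_16 : ((Nat.factorial (3*N+17)) : ℝ) = (3*(N:ℝ)+17) * (Nat.factorial (3*N+16)) := by
    rw [show 3*N+17 = (3*N+16)+1 by omega, Nat.factorial_succ]; push_cast; ring
  have w3_17 : ((Nat.factorial (3*N+18)) : ℝ) = (3*(N:ℝ)+18) * (Nat.factorial (3*N+17)) := by
    rw [show 3*N+18 = (3*N+17)+1 by omega, Nat.factorial_succ]; push_cast; ring
  have w3_18 : ((Nat.factorial (3*N+19)) : ℝ) = (3*(N:ℝ)+19) * (Nat.factorial (3*N+18)) := by
    rw [show 3*N+19 = (3*N+18)+1 by omega, Nat.factorial_succ]; push_cast; ring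
  have w3_19 : ((Nat.factorial (3*N+20)) : ℝ) = (3*(N:ℝ)+20) * (Nat.factorial (3*N+19)) := by
    rw [show 3*N+20 = (3*N+19)+1 by omega, Nat.factorial_succ]; push_cast; ring
  have w3_20 : ((Nat.factorial (3*N+21)) : ℝ) = (3*(N:ℝ)+21) * (Nat.factorial (3*N+20)) := by
    rw [show 3*N+21 = (3*N+20)+1 by omega, Nat.factorial_succ]; push_cast; ring
  have w3_21 : ((Nat.factorial (3*N+22)) : ℝ) = (3*(N:ℝ)+22) * (Nat.factorial (3*N+21)) := by
    rw [show 3*N+22 = (3*N+21)+1 by omega, Nat.factorial_succ]; push_cast; ring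
  have w3_22 : ((Nat.factorial (3*N+23)) : ℝ) = (3*(N:ℝ)+23) * (Nat.factorial (3*N+22)) := by
    rw [show 3*N+23 = (3*N+22)+1 by omega, Nat.factorial_succ]; push_cast; ring
  have w3_23 : ((Nat.factorial (3*N+24)) : ℝ) = (3*(N:ℝ)+24) * (Nat.factorial (3*N+23)) := by
    rw [show 3*N+24 = (3*N+23)+1 by omega, Nat.factorial_succ]; push_cast; ring
  have wN_0 : ((Nat.factorial (N+1)) : ℝ) = ((N:ℝ)+1) * (Nat.factorial N) := by
    rw [Nat.factorial_succ]; push_cast; ring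
  have wN_1 : ((Nat.factorial (N+2)) : ℝ) = ((N:ℝ)+2) * (Nat.factorial (N+1)) := by
    rw [show N+2 = (N+1)+1 by omega, Nat.factorial_succ]; push_cast; ring
  have wN_2 : ((Nat.factorial (N+3)) : ℝ) = ((N:ℝ)+3) * (Nat.factorial (N+2)) := by
    rw [show N+3 = (N+2)+1 by omega, Nat.factorial_succ]; push_cast; ring
  have wN_3 : ((Nat.factorial (N+4)) : ℝ) = ((N:ℝ)+4) * (Nat.factorial (N+3)) := by
    rw [show N+4 = (N+3)+1 by omega, Nat.factorial_succ]; push_cast; ring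
  have wN_4 : ((Nat.factorial (N+5)) : ℝ) = ((N:ℝ)+5) * (Nat.factorial (N+4)) := by
    rw [show N+5 = (N+4)+1 by omega, Nat.factorial_succ]; push_cast; ring
  have hN0 : (0:ℝ) ≤ (N:ℝ) := Nat.cast_nonneg N
  have nb1 : ((Nat.factorial (4*N+15)) : ℝ) ≠ 0 := Nat.cast_ne_zero.mpr (Nat.factorial_ne_zero _)
  have nb2 : ((Nat.factorial (3*N+14)) : ℝ) ≠ 0 := Nat.cast_ne_zero.mpr (Nat.factorial_ne_zero _)
  have nb3 : ((Nat.factorial N) : ℝ) ≠ 0 := Nat.cast_ne_zero.mpr (Nat.factorial_ne_zero _)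
  have nz0 : (4*(N:ℝ)+16) ≠ 0 := ne_of_gt (by linarith)
  have nz1 : (4*(N:ℝ)+17) ≠ 0 := ne_of_gt (by linarith)
  have nz2 : (4*(N:ℝ)+18) ≠ 0 := ne_of_gt (by linarith)
  have nz3 : (4*(N:ℝ)+19) ≠ 0 := ne_of_gt (by linarith)
  have nz4 : (4*(N:ℝ)+20) ≠ 0 := ne_of_gt (by linarith)
  have nz5 : (4*(N:ℝ)+21) ≠ 0 := ne_of_gt (by linarith)
  have nz6 : (4*(N:ℝ)+22) ≠ 0 := ne_of_gt (by linarith)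
  have nz7 : (4*(N:ℝ)+23) ≠ 0 := ne_of_gt (by linarith)
  have nz8 : (3*(N:ℝ)+15) ≠ 0 := ne_of_gt (by linarith)
  have nz9 : (3*(N:ℝ)+16) ≠ 0 := ne_of_gt (by linarith)
  have nz10 : (3*(N:ℝ)+17) ≠ 0 := ne_of_gt (by linarith)
  have nz11 : (3*(N:ℝ)+18) ≠ 0 := ne_of_gt (by linarith)
  have nz12 : (3*(N:ℝ)+19) ≠ 0 := ne_of_gt (by linarith)
  have nz13 : (3*(N:ℝ)+20) ≠ 0 := ne_of_gt (by linarith)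
  have nz14 : (3*(N:ℝ)+21) ≠ 0 := ne_of_gt (by linarith)
  have nz15 : (3*(N:ℝ)+22) ≠ 0 := ne_of_gt (by linarith)
  have nz16 : (3*(N:ℝ)+23) ≠ 0 := ne_of_gt (by linarith)
  have nz17 : (3*(N:ℝ)+24) ≠ 0 := ne_of_gt (by linarith)
  have nz18 : ((N:ℝ)+1) ≠ 0 := ne_of_gt (by linarith)
  have nz19 : ((N:ℝ)+2) ≠ 0 := ne_of_gt (by linarith)
  have nz20 : ((N:ℝ)+3) ≠ 0 := ne_of_gt (by linarith)
  have nz21 : ((N:ℝ)+4) ≠ 0 := ne_of_gt (by linarith)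
  have nz22 : ((N:ℝ)+5) ≠ 0 := ne_of_gt (by linarith)
  have nz23 : ((N:ℝ)+6) ≠ 0 := ne_of_gt (by linarith)
  have nz24 : ((N:ℝ)+7) ≠ 0 := ne_of_gt (by linarith)
  have nz25 : ((N:ℝ)+8) ≠ 0 := ne_of_gt (by linarith)
  have R16 : fc N (16:ℝ) = ((16 * ((N:ℝ)+1) * ((N:ℝ)+2) * ((N:ℝ)+3) * ((N:ℝ)+4) * ((N:ℝ)+5)) / (2 * (4*(N:ℝ)+16) * (4*(N:ℝ)+17) * (3*(N:ℝ)+15) * (3*(N:ℝ)+16))) * a4 := by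
    rw [h16, ha, w4_16, w4_15]
    rw [w3_15, w3_14]
    rw [wN_4, wN_3, wN_2, wN_1, wN_0]
    field_simp
  have R17 : fc N (17:ℝ) = ((17 * ((N:ℝ)+1) * ((N:ℝ)+2) * ((N:ℝ)+3) * ((N:ℝ)+4) * ((N:ℝ)+5)) / (2 * (4*(N:ℝ)+17) * (3*(N:ℝ)+15) * (3*(N:ℝ)+16) * (3*(N:ℝ)+17))) * a4 := by
    rw [h17, ha, w4_16, w4_15]
    rw [w3_16, w3_15, w3_14]
    rw [wN_4, wN_3, wN_2, wN_1, wN_0]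
    field_simp
  have R18 : fc N (18:ℝ) = ((18 * ((N:ℝ)+1) * ((N:ℝ)+2) * ((N:ℝ)+3) * ((N:ℝ)+4) * ((N:ℝ)+5)) / (2 * (3*(N:ℝ)+15) * (3*(N:ℝ)+16) * (3*(N:ℝ)+17) * (3*(N:ℝ)+18))) * a4 := by
    rw [h18, ha, w4_16, w4_15]
    rw [w3_17, w3_16, w3_15, w3_14]
    rw [wN_4, wN_3, wN_2, wN_1, wN_0]
    field_simp
  have R19 : fc N (19:ℝ) = ((19 * ((N:ℝ)+1) * ((N:ℝ)+2) * ((N:ℝ)+3) * ((N:ℝ)+4) * ((N:ℝ)+5) * (4*(N:ℝ)+18)) / (2 * (3*(N:ℝ)+15) * (3*(N:ℝ)+16) * (3*(N:ℝ)+17) * (3*(N:ℝ)+18) * (3*(N:ℝ)+19))) * a4 := by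
    rw [h19, ha, w4_17, w4_16, w4_15]
    rw [w3_18, w3_17, w3_16, w3_15, w3_14]
    rw [wN_4, wN_3, wN_2, wN_1, wN_0]
    field_simp
  have R20 : fc N (20:ℝ) = ((20 * ((N:ℝ)+1) * ((N:ℝ)+2) * ((N:ℝ)+3) * ((N:ℝ)+4) * ((N:ℝ)+5) * (4*(N:ℝ)+18) * (4*(N:ℝ)+19)) / (2 * (3*(N:ℝ)+15) * (3*(N:ℝ)+16) * (3*(N:ℝ)+17) * (3*(N:ℝ)+18) * (3*(N:ℝ)+19) * (3*(N:ℝ)+20))) * a4 := by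
    rw [h20, ha, w4_18, w4_17, w4_16, w4_15]
    rw [w3_19, w3_18, w3_17, w3_16, w3_15, w3_14]
    rw [wN_4, wN_3, wN_2, wN_1, wN_0]
    field_simp
  have R21 : fc N (21:ℝ) = ((21 * ((N:ℝ)+1) * ((N:ℝ)+2) * ((N:ℝ)+3) * ((N:ℝ)+4) * ((N:ℝ)+5) * (4*(N:ℝ)+18) * (4*(N:ℝ)+19) * (4*(N:ℝ)+20)) / (2 * (3*(N:ℝ)+15) * (3*(N:ℝ)+16) * (3*(N:ℝ)+17) * (3*(N:ℝ)+18) * (3*(N:ℝ)+19) * (3*(N:ℝ)+20) * (3*(N:ℝ)+21))) * a4 := by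
    rw [h21, ha, w4_19, w4_18, w4_17, w4_16, w4_15]
    rw [w3_20, w3_19, w3_18, w3_17, w3_16, w3_15, w3_14]
    rw [wN_4, wN_3, wN_2, wN_1, wN_0]
    field_simp
  have R22 : fc N (22:ℝ) = ((22 * ((N:ℝ)+1) * ((N:ℝ)+2) * ((N:ℝ)+3) * ((N:ℝ)+4) * ((N:ℝ)+5) * (4*(N:ℝ)+18) * (4*(N:ℝ)+19) * (4*(N:ℝ)+20) * (4*(N:ℝ)+21)) / (2 * (3*(N:ℝ)+15) * (3*(N:ℝ)+16) * (3*(N:ℝ)+17) * (3*(N:ℝ)+18) * (3*(N:ℝ)+19) * (3*(N:ℝ)+20) * (3*(N:ℝ)+21) * (3*(N:ℝ)+22))) * a4 := by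
    rw [h22, ha, w4_20, w4_19, w4_18, w4_17, w4_16, w4_15]
    rw [w3_21, w3_20, w3_19, w3_18, w3_17, w3_16, w3_15, w3_14]
    rw [wN_4, wN_3, wN_2, wN_1, wN_0]
    field_simp
  have R23 : fc N (23:ℝ) = ((23 * ((N:ℝ)+1) * ((N:ℝ)+2) * ((N:ℝ)+3) * ((N:ℝ)+4) * ((N:ℝ)+5) * (4*(N:ℝ)+18) * (4*(N:ℝ)+19) * (4*(N:ℝ)+20) * (4*(N:ℝ)+21) * (4*(N:ℝ)+22)) / (2 * (3*(N:ℝ)+15) * (3*(N:ℝ)+16) * (3*(N:ℝ)+17) * (3*(N:ℝ)+18) * (3*(N:ℝ)+19) * (3*(N:ℝ)+20) * (3*(N:ℝ)+21) * (3*(N:ℝ)+22) * (3*(N:ℝ)+23))) * a4 := by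
    rw [h23, ha, w4_21, w4_20, w4_19, w4_18, w4_17, w4_16, w4_15]
    rw [w3_22, w3_21, w3_20, w3_19, w3_18, w3_17, w3_16, w3_15, w3_14]
    rw [wN_4, wN_3, wN_2, wN_1, wN_0]
    field_simp
  have R24 : fc N (24:ℝ) = ((24 * ((N:ℝ)+1) * ((N:ℝ)+2) * ((N:ℝ)+3) * ((N:ℝ)+4) * ((N:ℝ)+5) * (4*(N:ℝ)+18) * (4*(N:ℝ)+19) * (4*(N:ℝ)+20) * (4*(N:ℝ)+21) * (4*(N:ℝ)+22) * (4*(N:ℝ)+23)) / (2 * (3*(N:ℝ)+15) * (3*(N:ℝ)+16) * (3*(N:ℝ)+17) * (3*(N:ℝ)+18) * (3*(N:ℝ)+19) * (3*(N:ℝ)+20) * (3*(N:ℝ)+21) * (3*(N:ℝ)+22) * (3*(N:ℝ)+23) * (3*(N:ℝ)+24))) * a4 := by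
    rw [h24, ha, w4_22, w4_21, w4_20, w4_19, w4_18, w4_17, w4_16, w4_15]
    rw [w3_23, w3_22, w3_21, w3_20, w3_19, w3_18, w3_17, w3_16, w3_15, w3_14]
    rw [wN_4, wN_3, wN_2, wN_1, wN_0]
    field_simp
  rw [R16, R17, R18, R19, R20, R21, R22, R23, R24, div_eq_iff hane]
  linear_combination a4 * scalar (N:ℝ) (Nat.cast_nonneg N)

set_option maxHeartbeats 1000000 in
theorem stmt12 (n : ℕ) (hn : 4 ≤ n) :
    (∑ i ∈ Finset.Ico 1 n, ∑ j ∈ Finset.Ico 1 (n - i), ∑ k ∈ Finset.Ico 1 (n - i - j),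
        a i * a j * a k * a (n - i - j - k)) / a n =
      (20 * ((n : ℝ) - 1) * (n - 2) * (n - 3) *
          (25 * (n : ℝ)^6 + 1350 * n^5 + 31495 * n^4 + 347406 * n^3 +
            1211092 * n^2 + 1580304 * n + 665280)) /
        (27 * (3 * (n : ℝ) + 11) * (3 * n + 8) * (3 * n + 5) * (3 * n + 10) *
          (3 * n + 7) * (3 * n + 4) * (n + 4) * (n + 3) * (n + 2)) := by
  obtain ⟨N, rfl⟩ : ∃ N, n = N + 4 := ⟨n - 4, by omega⟩
  have hsum : (∑ i ∈ Finset.Ico 1 (N+4), ∑ j ∈ Finset.Ico 1 (N+4 - i),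
      ∑ k ∈ Finset.Ico 1 (N+4 - i - j), a i * a j * a k * a (N+4 - i - j - k)) = G4 N := by
    rw [← nest N]
    rw [Finset.sum_Ico_eq_sum_range, show N+4-1 = N+3 by omega]
    apply Finset.sum_congr rfl
    intro i hi
    rw [Finset.mem_range] at hi
    rw [Finset.sum_Ico_eq_sum_range, show N+4-(1+i)-1 = N+2-i by omega]
    apply Finset.sum_congr rfl
    intro j hj
    rw [Finset.mem_range] at hj
    rw [Finset.sum_Ico_eq_sum_range, show N+4-(1+i)-(1+j)-1 = N+1-i-j by omega]
    apply Finset.sum_congr rfl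
    intro k hk
    rw [Finset.mem_range] at hk
    rw [show 1+i = i+1 by omega, show 1+j = j+1 by omega, show 1+k = k+1 by omega,
      show N+4-(i+1)-(j+1)-(k+1) = (N-i-j-k)+1 by omega,
      a_succ, a_succ, a_succ, a_succ]
  rw [hsum, G4_eq]
  have h := final N
  push_cast at h ⊢
  linear_combination h
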